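/- arXiv:1310.5011 — 4 statements merged into one kernel-verified Lean document; each statement's English description precedes it below -/
import Mathlib

section
/- An equation s = t between terms over the meadow signature Σ_m = (0,1,−,+,·,⁻¹) holds in every meadow of characteristic 0 if and only if it holds in the zero-totalized field of complex numbers ℂ₀ (the complex numbers with their usual operations and inverse satisfying 0⁻¹ = 0). -/
/-- A meadow: a commutative ring with a total inverse operation satisfying
`(x⁻¹)⁻¹ = x` and the restricted inverse law `x * (x * x⁻¹) = x`. -/
class Meadow (M : Type) extends CommRing M, Inv M where
  minv_inv : ∀ x : M, x⁻¹⁻¹ = x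
  ril : ∀ x : M, x * (x * x⁻¹) = x

/-- The Inverse Law `IL`: a cancellation meadow is a meadow satisfying it. -/
def InverseLaw (M : Type) [Meadow M] : Prop :=
  ∀ x : M, x ≠ 0 → x * x⁻¹ = 1

/-- Terms over the meadow signature `Σ_m = (0,1,−,+,·,⁻¹)` with variables in `ℕ`. -/
inductive MTerm : Type
  | var : ℕ → MTerm
  | zero : MTerm
  | one : MTerm
  | neg : MTerm → MTerm
  | add : MTerm → MTerm → MTerm
  | mul : MTerm → MTerm → MTerm
  | inv : MTerm → MTerm

def MTerm.eval {M : Type} [Zero M] [One M] [Neg M] [Add M] [Mul M] [Inv M]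
    (ρ : ℕ → M) : MTerm → M
  | .var v => ρ v
  | .zero => 0
  | .one => 1
  | .neg t => -(t.eval ρ)
  | .add s t => s.eval ρ + t.eval ρ
  | .mul s t => s.eval ρ * t.eval ρ
  | .inv t => (t.eval ρ)⁻¹

/-- A meadow has characteristic 0 if `n · n⁻¹ = 1` for every positive integer `n`. -/
def MeadowChar0 (M : Type) [Meadow M] : Prop :=
  ∀ n : ℕ, 0 < n → (n : M) * (n : M)⁻¹ = 1

/-! ### Auxiliary lemmas -/

section Aux

open Cardinal

/-- Evaluation of terms commutes with inverse-preserving ring homomorphisms. -/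
lemma MTerm.eval_map {M K : Type} [Ring M] [Inv M] [Ring K] [Inv K]
    (f : M →+* K) (hinv : ∀ x : M, f x⁻¹ = (f x)⁻¹) (ρ : ℕ → M) :
    ∀ u : MTerm, u.eval (fun n => f (ρ n)) = f (u.eval ρ)
  | .var v => rfl
  | .zero => (map_zero f).symm
  | .one => (map_one f).symm
  | .neg u => by rw [MTerm.eval, MTerm.eval, MTerm.eval_map f hinv ρ u, map_neg]
  | .add u v => by
      rw [MTerm.eval, MTerm.eval, MTerm.eval_map f hinv ρ u, MTerm.eval_map f hinv ρ v, map_add]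
  | .mul u v => by
      rw [MTerm.eval, MTerm.eval, MTerm.eval_map f hinv ρ u, MTerm.eval_map f hinv ρ v, map_mul]
  | .inv u => by rw [MTerm.eval, MTerm.eval, MTerm.eval_map f hinv ρ u, hinv]

variable {M : Type} [Meadow M]

lemma Meadow.sq_zero {x : M} (h : x * x = 0) : x = 0 := by
  have h1 : x = x * x * x⁻¹ := by
    conv_lhs => rw [← Meadow.ril x]
    ring
  rw [h1, h, zero_mul]

lemma Meadow.pow_succ_zero (x : M) : ∀ n : ℕ, x ^ (n + 1) = 0 → x = 0 := by
  intro n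
  induction n with
  | zero => intro h; simpa using h
  | succ n ih =>
      intro h
      apply ih
      apply Meadow.sq_zero
      have : x ^ (n + 1) * x ^ (n + 1) = x ^ (n + 2) * x ^ n := by ring
      rw [this, h, zero_mul]

lemma Meadow.eq_zero_of_nilpotent {x : M} (h1 : (1 : M) ≠ 0) (h : IsNilpotent x) : x = 0 := by
  obtain ⟨n, hn⟩ := h
  cases n with
  | zero => exact absurd (by simpa using hn) h1
  | succ n => exact Meadow.pow_succ_zero x n hn

/-- Every countable field of characteristic zero embeds into `ℂ`. -/
lemma exists_ringHom_complex (F : Type) [Field F] [CharZero F] [Countable F] :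
    Nonempty (F →+* ℂ) := by
  obtain ⟨s, hs⟩ := exists_isTranscendenceBasis ℚ (A := F)
  obtain ⟨t, ht⟩ := exists_isTranscendenceBasis ℚ (A := ℂ)
  have hcards : #s ≤ #t := by
    have h1 : #s ≤ ℵ₀ := Cardinal.mk_le_aleph0
    have h2 : ℵ₀ ≤ #t := by
      by_contra h2
      push_neg at h2
      have hle := IsAlgClosed.cardinal_le_max_transcendence_basis' ((↑) : t → ℂ) ht
      have : #ℂ ≤ ℵ₀ := by
        refine hle.trans (max_le (max_le ?_ h2.le) le_rfl)
        exact (Cardinal.mk_denumerable ℚ).le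
      rw [mk_complex] at this
      exact absurd this (not_le.mpr Cardinal.aleph0_lt_continuum)
    exact h1.trans h2
  obtain ⟨j⟩ := Cardinal.le_def (↥s) (↥t) |>.mp hcards
  let A := Algebra.adjoin ℚ (Set.range ((↑) : s → F))
  let e1 : A ≃ₐ[ℚ] MvPolynomial s ℚ := hs.1.aevalEquiv.symm
  let e2 : MvPolynomial s ℚ →ₐ[ℚ] MvPolynomial t ℚ := MvPolynomial.rename j
  let e3 : MvPolynomial t ℚ →ₐ[ℚ] ℂ := MvPolynomial.aeval ((↑) : t → ℂ)
  let g0 : A →+* ℂ := (e3.comp (e2.comp e1.toAlgHom)).toRingHom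
  have hg0 : Function.Injective g0 := by
    have h3 : Function.Injective e3 := ht.1
    have h2 : Function.Injective e2 := MvPolynomial.rename_injective j j.injective
    have h1 : Function.Injective e1 := e1.injective
    exact h3.comp (h2.comp h1)
  letI : Algebra A ℂ := g0.toAlgebra
  haveI : Module.IsTorsionFree A ℂ := by
    rw [Module.isTorsionFree_iff_faithfulSMul, faithfulSMul_iff_algebraMap_injective]; exact hg0
  haveI : Module.IsTorsionFree A F := by
    rw [Module.isTorsionFree_iff_faithfulSMul, faithfulSMul_iff_algebraMap_injective]; exact (Subtype.val_injective)
  haveI : Algebra.IsAlgebraic A F := hs.isAlgebraic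
  exact ⟨(IsAlgClosed.lift (R := A) (S := F) (M := ℂ)).toRingHom⟩

/-- If an equation holds in `ℂ₀`, it holds in every field of characteristic zero. -/
lemma field_case (s t : MTerm) (h : ∀ ρ : ℕ → ℂ, s.eval ρ = t.eval ρ)
    (K : Type) [Field K] [CharZero K] (ρ : ℕ → K) : s.eval ρ = t.eval ρ := by
  set F := Subfield.closure (Set.range ρ) with hF
  haveI : Countable F := by
    rw [← Cardinal.mk_le_aleph0_iff]
    refine (Subfield.cardinalMk_closure_le_max _).trans (max_le ?_ le_rfl)
    haveI := (Set.countable_range ρ).to_subtype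
    exact Cardinal.mk_le_aleph0
  haveI : CharZero F := by
    constructor
    intro a b hab
    have := congrArg F.subtype hab
    rw [map_natCast, map_natCast] at this
    exact Nat.cast_injective this
  let ρF : ℕ → F := fun n => ⟨ρ n, Subfield.subset_closure (Set.mem_range_self n)⟩
  obtain ⟨g⟩ := exists_ringHom_complex F
  have key : s.eval ρF = t.eval ρF := by
    apply g.injective
    rw [← MTerm.eval_map g (map_inv₀ g) ρF s, ← MTerm.eval_map g (map_inv₀ g) ρF t]
    exact h _
  have h2 := congrArg F.subtype key
  rw [← MTerm.eval_map F.subtype (map_inv₀ F.subtype) ρF s,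
      ← MTerm.eval_map F.subtype (map_inv₀ F.subtype) ρF t] at h2
  exact h2

end Aux

noncomputable instance : Meadow ℂ :=
  { (inferInstance : CommRing ℂ), (inferInstance : Inv ℂ) with
    minv_inv := fun x => inv_inv x
    ril := fun x => by
      rcases eq_or_ne x 0 with hx | hx
      · simp [hx]
      · rw [mul_inv_cancel₀ hx, mul_one] }

/-- an equation over `Σ_m` holds in every meadow of characteristic 0
iff it holds in the zero-totalized field of complex numbers `ℂ₀`. -/
theorem meadow_char_zero_eq_iff_complex (s t : MTerm) :
    (∀ (M : Type) [Meadow M], MeadowChar0 M → ∀ ρ : ℕ → M, s.eval ρ = t.eval ρ) ↔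
    (∀ ρ : ℕ → ℂ, s.eval ρ = t.eval ρ) := by
  constructor
  · intro H ρ
    exact H ℂ (fun n hn => mul_inv_cancel₀ (Nat.cast_ne_zero.mpr hn.ne')) ρ
  · intro h M _ hchar ρ
    by_contra hne
    by_cases h1 : (1 : M) = 0
    · refine hne ?_
      have hz : ∀ x : M, x = 0 := fun x => by rw [← mul_one x, h1, mul_zero]
      rw [hz (s.eval ρ), hz (t.eval ρ)]
    set d := s.eval ρ - t.eval ρ with hd
    have hd0 : d ≠ 0 := sub_ne_zero.mpr hne
    have hnil : d ∉ nilradical M := fun hmem =>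
      hd0 (Meadow.eq_zero_of_nilpotent h1 (mem_nilradical.mp hmem))
    rw [nilradical_eq_sInf, Ideal.mem_sInf] at hnil
    push_neg at hnil
    obtain ⟨P, hP, hdP⟩ := hnil
    haveI : P.IsPrime := hP
    let K := FractionRing (M ⧸ P)
    let f : M →+* K := (algebraMap (M ⧸ P) K).comp (Ideal.Quotient.mk P)
    have fzero : ∀ x : M, x ∈ P → f x = 0 := by
      intro x hx
      show algebraMap (M ⧸ P) K (Ideal.Quotient.mk P x) = 0
      rw [Ideal.Quotient.eq_zero_iff_mem.mpr hx, map_zero]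
    have finv : ∀ x : M, f x⁻¹ = (f x)⁻¹ := by
      intro x
      by_cases hx : x ∈ P
      · have hxinv : x⁻¹ ∈ P := by
          have hxe : x⁻¹ = x⁻¹ * (x⁻¹ * x) := by
            conv_lhs => rw [← Meadow.ril x⁻¹, Meadow.minv_inv]
          rw [hxe]
          exact Ideal.mul_mem_left _ _ (Ideal.mul_mem_left _ _ hx)
        rw [fzero x hx, fzero _ hxinv, inv_zero]
      · have hmem : x * (x * x⁻¹ - 1) ∈ P := by
          have he : x * (x * x⁻¹ - 1) = x * (x * x⁻¹) - x := by ring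
          rw [he, Meadow.ril, sub_self]
          exact P.zero_mem
        have h2 : x * x⁻¹ - 1 ∈ P := (Ideal.IsPrime.mem_or_mem ‹_› hmem).resolve_left hx
        have h3 : f x * f x⁻¹ = 1 := by
          have := fzero _ h2
          rw [map_sub, map_mul, map_one, sub_eq_zero] at this
          exact this
        exact eq_inv_of_mul_eq_one_right h3
    have hcast : ∀ n : ℕ, 0 < n → (n : K) ≠ 0 := by
      intro n hn h0
      have h1' := congrArg f (hchar n hn)
      rw [map_mul, map_one, map_natCast, finv, map_natCast] at h1'
      rw [h0, inv_zero, mul_zero] at h1'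
      exact zero_ne_one h1'
    haveI : CharZero K := by
      have key : ∀ a b : ℕ, a < b → (a : K) = (b : K) → False := by
        intro a b hab hcasteq
        have : ((b - a : ℕ) : K) = 0 := by
          rw [Nat.cast_sub hab.le, ← hcasteq, sub_self]
        exact hcast (b - a) (by omega) this
      constructor
      intro a b hab
      rcases lt_trichotomy a b with hlt | heq | hlt
      · exact (key a b hlt hab).elim
      · exact heq
      · exact (key b a hlt hab.symm).elim
    have hfd : f d ≠ 0 := by
      intro h0
      have : Ideal.Quotient.mk P d = 0 :=
        (IsFractionRing.to_map_eq_zero_iff (K := K)).mp h0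
      exact hdP (Ideal.Quotient.eq_zero_iff_mem.mp this)
    apply hfd
    have h1' : s.eval (fun n => f (ρ n)) = t.eval (fun n => f (ρ n)) := field_case s t h K _
    rw [MTerm.eval_map f finv ρ s, MTerm.eval_map f finv ρ t] at h1'
    rw [hd, map_sub, h1', sub_self]
end

section
/- Every signed meadow is formally real: in every signed meadow, for every n and all elements x₀, …, xₙ, the equation (EFR_n): 0_{x₀²+⋯+xₙ²}·x₀ = 0 holds. -/
/-- The axioms `Signs` for a sign operation on a meadow, where `1_x = x·x⁻¹` and
`0_x = 1 - x·x⁻¹`. -/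
structure IsSign (M : Type) [Meadow M] (sg : M → M) : Prop where
  s1 : ∀ x : M, sg (x * x⁻¹) = x * x⁻¹
  s2 : ∀ x : M, sg (1 - x * x⁻¹) = 1 - x * x⁻¹
  s3 : sg (-1) = -1
  s4 : ∀ x : M, sg x⁻¹ = sg x
  s5 : ∀ x y : M, sg (x * y) = sg x * sg y
  s6 : ∀ x y : M,
    (1 - (sg x - sg y) * (sg x - sg y)⁻¹) * (sg (x + y) - sg x) = 0

namespace MeadowAux

variable {M : Type} [Meadow M]

lemma ril_inv (x : M) : x⁻¹ * (x⁻¹ * x) = x⁻¹ := by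
  have h := Meadow.ril (M := M) x⁻¹
  rwa [Meadow.minv_inv] at h

/-- Pseudo-inverses are unique in a meadow. -/
lemma inv_unique (a b : M) (h1 : a * b * a = a) (h2 : b * a * b = b) : a⁻¹ = b := by
  have r1 := Meadow.ril (M := M) a
  have r2 := ril_inv a
  linear_combination (a*b^2*a⁻¹ - a*b*(a⁻¹)^2 + b^2 - b*a⁻¹) * r1 +
    (a^3*b^2*a⁻¹ + a^2*b^2 - 1) * r2 + (-(a⁻¹)^2) * h1 +
    (-(a^3*(a⁻¹)^3) - a^2*(a⁻¹)^2 + a*a⁻¹ + 1) * h2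

lemma inv_self (d : M) (h : d * d * d = d) : d⁻¹ = d :=
  inv_unique d d h h

lemma mul_inv'' (x y : M) : (x * y)⁻¹ = x⁻¹ * y⁻¹ := by
  apply inv_unique
  · linear_combination (y*(y*y⁻¹)) * Meadow.ril (M := M) x + x * Meadow.ril (M := M) y
  · linear_combination (y⁻¹*(y⁻¹*y)) * ril_inv x + x⁻¹ * ril_inv y

variable (sg : M → M)

lemma sgn_sq (hs : IsSign M sg) (x : M) : sg x * sg x = x * x⁻¹ := by
  have h := hs.s5 x x⁻¹
  rw [hs.s4] at h
  rw [← h, hs.s1]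

lemma P_zero (hs : IsSign M sg) : sg (0 : M) = 0 * (0 : M)⁻¹ := by
  have h := hs.s1 (0 : M)
  rw [zero_mul] at h
  rw [zero_mul]
  exact h

lemma P_sq (hs : IsSign M sg) (x : M) : sg (x * x) = (x * x) * (x * x)⁻¹ := by
  rw [hs.s5, sgn_sq sg hs, mul_inv'']
  linear_combination (-x⁻¹) * Meadow.ril (M := M) x

/-- The key fact: the sum of two "nonnegative" elements has sign
`1_a + 1_b - 1_a·1_b`. -/
lemma sgn_add_form (hs : IsSign M sg) (a b : M) (ha : sg a = a * a⁻¹) (hb : sg b = b * b⁻¹) :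
    sg (a + b) = a * a⁻¹ + b * b⁻¹ - (a * a⁻¹) * (b * b⁻¹) := by
  have ia : (a*a⁻¹) * (a*a⁻¹) = a*a⁻¹ := by
    linear_combination a⁻¹ * Meadow.ril (M := M) a
  have ib : (b*b⁻¹) * (b*b⁻¹) = b*b⁻¹ := by
    linear_combination b⁻¹ * Meadow.ril (M := M) b
  have hd : (sg a - sg b)⁻¹ = sg a - sg b := by
    rw [ha, hb]
    apply inv_self
    linear_combination (a*a⁻¹ + 1 - 3*(b*b⁻¹)) * ia + (3*(a*a⁻¹) - b*b⁻¹ - 1) * ib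
  have h6 := hs.s6 a b
  rw [hd, ha, hb] at h6
  have f2 : (1 - b*b⁻¹) * sg (a + b) = (1 - b*b⁻¹) * (a*a⁻¹) := by
    have hob : (1 - b*b⁻¹) * (a + b) = (1 - b*b⁻¹) * a := by
      linear_combination -Meadow.ril (M := M) b
    have h := congrArg sg hob
    rw [hs.s5, hs.s5, hs.s2, ha] at h
    exact h
  have f3 : (1 - a*a⁻¹) * sg (a + b) = (1 - a*a⁻¹) * (b*b⁻¹) := by
    have hoa : (1 - a*a⁻¹) * (a + b) = (1 - a*a⁻¹) * b := by
      linear_combination -Meadow.ril (M := M) a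
    have h := congrArg sg hoa
    rw [hs.s5, hs.s5, hs.s2, hb] at h
    exact h
  linear_combination h6 + (a*a⁻¹) * f2 + (b*b⁻¹) * f3 +
    ((b*b⁻¹)^2 + sg (a + b) - a*a⁻¹) * ia +
    (-(a*a⁻¹)^2 - a*a⁻¹ + sg (a + b) + 1) * ib

/-- "Nonnegative" elements are closed under addition. -/
lemma P_add (hs : IsSign M sg) (a b : M) (ha : sg a = a * a⁻¹) (hb : sg b = b * b⁻¹) :
    sg (a + b) = (a + b) * (a + b)⁻¹ := by
  have ia : (a*a⁻¹) * (a*a⁻¹) = a*a⁻¹ := by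
    linear_combination a⁻¹ * Meadow.ril (M := M) a
  have ib : (b*b⁻¹) * (b*b⁻¹) = b*b⁻¹ := by
    linear_combination b⁻¹ * Meadow.ril (M := M) b
  have hform := sgn_add_form sg hs a b ha hb
  have hidem : sg (a + b) * sg (a + b) = sg (a + b) := by
    linear_combination (sg (a + b) + (a*a⁻¹ + b*b⁻¹ - (a*a⁻¹)*(b*b⁻¹)) - 1) * hform +
      ((b*b⁻¹)^2 - 2*(b*b⁻¹) + 1) * ia + (1 - a*a⁻¹) * ib
  have hsq := sgn_sq sg hs (a + b)
  linear_combination hsq - hidem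

lemma P_sum (hs : IsSign M sg) : ∀ (n : ℕ) (y : Fin n → M),
    sg (∑ i, y i ^ 2) = (∑ i, y i ^ 2) * (∑ i, y i ^ 2)⁻¹ := by
  intro n
  induction n with
  | zero =>
    intro y
    simp only [Finset.univ_eq_empty, Finset.sum_empty]
    exact P_zero sg hs
  | succ m ih =>
    intro y
    rw [Fin.sum_univ_succ]
    refine P_add sg hs _ _ ?_ (ih fun i => y i.succ)
    rw [pow_two]
    exact P_sq sg hs (y 0)

end MeadowAux

/-- every signed meadow is formally real, i.e. satisfies every
instance of `EFR_n`: `0_{x₀²+⋯+xₙ²} · x₀ = 0`. -/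
theorem signedMeadow_formallyReal (M : Type) [Meadow M] (sg : M → M)
    (hs : IsSign M sg) (n : ℕ) (x : Fin (n + 1) → M) :
    (1 - (∑ i, x i ^ 2) * (∑ i, x i ^ 2)⁻¹) * x 0 = 0 := by
  open MeadowAux in
  rw [Fin.sum_univ_succ]
  set T : M := ∑ i : Fin n, x i.succ ^ 2 with hT
  set a : M := x 0 ^ 2 with haa
  have hP : sg (a + T) = (a + T) * (a + T)⁻¹ := by
    have h := MeadowAux.P_sum sg hs (n + 1) x
    rwa [Fin.sum_univ_succ] at h
  have hform : sg (a + T) = a * a⁻¹ + T * T⁻¹ - (a * a⁻¹) * (T * T⁻¹) := by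
    refine MeadowAux.sgn_add_form sg hs a T ?_ (MeadowAux.P_sum sg hs n fun i => x i.succ)
    rw [haa, pow_two]
    exact MeadowAux.P_sq sg hs (x 0)
  have hra : a * (a * a⁻¹) = a := Meadow.ril a
  have h0 : (1 - (a + T) * (a + T)⁻¹) * a = 0 := by
    linear_combination a * hP - a * hform - (1 - T * T⁻¹) * hra
  have ie : ((a + T) * (a + T)⁻¹) * ((a + T) * (a + T)⁻¹) = (a + T) * (a + T)⁻¹ := by
    linear_combination (a + T)⁻¹ * Meadow.ril (a + T)
  have hz2 : ((1 - (a + T) * (a + T)⁻¹) * x 0) * ((1 - (a + T) * (a + T)⁻¹) * x 0) = 0 := by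
    linear_combination h0 + x 0 ^ 2 * ie - (x 0 ^ 2) * haa.symm * 0 + (by rw [haa] : a = x 0 ^ 2) * (1 - (a + T) * (a + T)⁻¹)
  have rz := Meadow.ril ((1 - (a + T) * (a + T)⁻¹) * x 0)
  linear_combination ((1 - (a + T) * (a + T)⁻¹) * x 0)⁻¹ * hz2 - rz
end

section
/- For each term t over the signed meadow signature Σ_ms = (0,1,−,+,·,⁻¹,s) there exists a Signed Standard Meadow Form t' with the same variables such that the equation t = t' holds in every signed meadow. -/
/-- Terms over the signed meadow signature `Σ_ms = (0,1,−,+,·,⁻¹,s)`. -/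
inductive STerm : Type
  | var : ℕ → STerm
  | zero : STerm
  | one : STerm
  | neg : STerm → STerm
  | add : STerm → STerm → STerm
  | mul : STerm → STerm → STerm
  | inv : STerm → STerm
  | sgn : STerm → STerm

def STerm.eval {M : Type} [Zero M] [One M] [Neg M] [Add M] [Mul M] [Inv M]
    (sg : M → M) (ρ : ℕ → M) : STerm → M
  | .var v => ρ v
  | .zero => 0
  | .one => 1
  | .neg t => -(t.eval sg ρ)
  | .add s t => s.eval sg ρ + t.eval sg ρ
  | .mul s t => s.eval sg ρ * t.eval sg ρ
  | .inv t => (t.eval sg ρ)⁻¹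
  | .sgn t => sg (t.eval sg ρ)

def STerm.vars : STerm → Set ℕ
  | .var v => {v}
  | .zero => ∅
  | .one => ∅
  | .neg t => t.vars
  | .add s t => s.vars ∪ t.vars
  | .mul s t => s.vars ∪ t.vars
  | .inv t => t.vars
  | .sgn t => t.vars

/-- `Σ_fs`-terms: terms over the signed field signature `(0,1,−,+,·,s)`,
i.e. signed meadow terms not containing `⁻¹`. -/
def STerm.InvFree : STerm → Prop
  | .var _ => True
  | .zero => True
  | .one => True
  | .neg t => t.InvFree
  | .add s t => s.InvFree ∧ t.InvFree
  | .mul s t => s.InvFree ∧ t.InvFree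
  | .inv _ => False
  | .sgn t => t.InvFree

/-- The pseudo one `1_u = u · u⁻¹` as a term. -/
def STerm.pseudoOne (u : STerm) : STerm := .mul u (.inv u)

/-- The pseudo zero `0_u = 1 − u · u⁻¹` as a term. -/
def STerm.pseudoZero (u : STerm) : STerm := .add .one (.neg u.pseudoOne)

/-- Signed Standard Meadow Forms, by level: level 0 forms are `u · v⁻¹` with `u,v`
`Σ_fs`-terms; level `n+1` forms are `0_u · P + 1_u · Q` with `u` a `Σ_fs`-term and
`P`, `Q` of level `n`. -/
inductive SSMF : ℕ → STerm → Prop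
  | base (u v : STerm) : u.InvFree → v.InvFree → SSMF 0 (.mul u (.inv v))
  | step (n : ℕ) (u P Q : STerm) : u.InvFree → SSMF n P → SSMF n Q →
      SSMF (n + 1) (.add (.mul u.pseudoZero P) (.mul u.pseudoOne Q))

/-! ### Auxiliary meadow lemmas -/

section MeadowLemmas

variable {M : Type} [Meadow M]

lemma m_ril (x : M) : x * x * x⁻¹ = x := by
  linear_combination Meadow.ril x

lemma m_ril' (x : M) : x⁻¹ * x⁻¹ * x = x⁻¹ := by
  have h := Meadow.ril (x⁻¹)
  rw [Meadow.minv_inv] at h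
  linear_combination h

lemma m_inv_one : (1 : M)⁻¹ = 1 := by
  have h := m_ril (1 : M)
  linear_combination h

lemma m_inv_zero : (0 : M)⁻¹ = 0 := by
  have h := m_ril' (0 : M)
  linear_combination -h

lemma m_inv_uniq {x y : M} (h1 : x * x * y = x) (h2 : y * y * x = y) : x⁻¹ = y := by
  have hef : x * x⁻¹ = x * y := by
    calc x * x⁻¹ = (x * x * y) * x⁻¹ := by rw [h1]
    _ = (x * x * x⁻¹) * y := by ring
    _ = x * y := by rw [m_ril]
  calc x⁻¹ = x⁻¹ * x⁻¹ * x := (m_ril' x).symm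
  _ = x⁻¹ * (x * x⁻¹) := by ring
  _ = x⁻¹ * (x * y) := by rw [hef]
  _ = (x * x⁻¹) * y := by ring
  _ = (x * y) * y := by rw [hef]
  _ = y * y * x := by ring
  _ = y := h2

lemma m_mul_inv (x y : M) : (x * y)⁻¹ = x⁻¹ * y⁻¹ := by
  apply m_inv_uniq
  · linear_combination (y * y * y⁻¹) * (m_ril x) + x * (m_ril y)
  · linear_combination (y⁻¹ * y⁻¹ * y) * (m_ril' x) + x⁻¹ * (m_ril' y)

lemma m_idem (x : M) : (x * x⁻¹) * (x * x⁻¹) = x * x⁻¹ := by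
  linear_combination x⁻¹ * m_ril x

lemma m_inv_split (e p q : M) (he : e * e = e) :
    ((1 + -e) * p + e * q)⁻¹ = (1 + -e) * p⁻¹ + e * q⁻¹ := by
  apply m_inv_uniq
  · linear_combination
      ((p - q) ^ 2 * ((1 - e) * p⁻¹ + e * q⁻¹) + (p ^ 2 - q ^ 2) * (p⁻¹ - q⁻¹)) * he
        + (1 - e) * m_ril p + e * m_ril q
  · linear_combination
      ((p⁻¹ - q⁻¹) ^ 2 * ((1 - e) * p + e * q) + (p⁻¹ ^ 2 - q⁻¹ ^ 2) * (p - q)) * he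
        + (1 - e) * m_ril' p + e * m_ril' q

lemma m_sgn_split {sg : M → M} (hs : IsSign M sg) (u p q : M) :
    sg ((1 + -(u * u⁻¹)) * p + u * u⁻¹ * q)
      = (1 + -(u * u⁻¹)) * sg p + u * u⁻¹ * sg q := by
  have he : (u * u⁻¹) * (u * u⁻¹) = u * u⁻¹ := m_idem u
  have h1 : (u * u⁻¹) * ((1 + -(u * u⁻¹)) * p + u * u⁻¹ * q) = (u * u⁻¹) * q := by
    linear_combination (q - p) * he
  have h2 : (1 - u * u⁻¹) * ((1 + -(u * u⁻¹)) * p + u * u⁻¹ * q) = (1 - u * u⁻¹) * p := by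
    linear_combination (p - q) * he
  have a1 := congrArg sg h1
  rw [hs.s5 (u * u⁻¹), hs.s5 (u * u⁻¹), hs.s1] at a1
  have a2 := congrArg sg h2
  rw [hs.s5 (1 - u * u⁻¹), hs.s5 (1 - u * u⁻¹), hs.s2] at a2
  linear_combination a1 + a2

lemma eval_pseudoZero (sg : M → M) (ρ : ℕ → M) (u : STerm) :
    (STerm.pseudoZero u).eval sg ρ = 1 - (u.eval sg ρ) * (u.eval sg ρ)⁻¹ := by
  simp [STerm.pseudoZero, STerm.pseudoOne, STerm.eval]
  ring

lemma eval_pseudoOne (sg : M → M) (ρ : ℕ → M) (u : STerm) :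
    (STerm.pseudoOne u).eval sg ρ = (u.eval sg ρ) * (u.eval sg ρ)⁻¹ := by
  simp [STerm.pseudoOne, STerm.eval]

end MeadowLemmas

/-! ### Closure properties of SSMFs -/

/-- Any SSMF can be lifted to any higher level, keeping variables and value. -/
theorem ssmf_lift {n : ℕ} {P : STerm} (h : SSMF n P) (k : ℕ) (hk : n ≤ k) :
    ∃ P' : STerm, SSMF k P' ∧ P'.vars = P.vars ∧
      ∀ (M : Type) [Meadow M] (sg : M → M), IsSign M sg →
        ∀ ρ : ℕ → M, P'.eval sg ρ = P.eval sg ρ := by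
  induction k, hk using Nat.le_induction with
  | base => exact ⟨P, h, rfl, fun M _ sg _ ρ => rfl⟩
  | succ k hk ih =>
    obtain ⟨P', hP', hv, he⟩ := ih
    refine ⟨.add (.mul (STerm.pseudoZero .zero) P') (.mul (STerm.pseudoOne .zero) P'),
      SSMF.step k .zero P' P' trivial hP' hP', ?_, ?_⟩
    · ext x
      simp only [STerm.vars, STerm.pseudoZero, STerm.pseudoOne, hv, Set.mem_union,
        Set.mem_empty_iff_false]
      try tauto
    · intro M _ sg hs ρ
      simp only [STerm.eval, eval_pseudoZero, eval_pseudoOne, he M sg hs ρ]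
      rw [m_inv_zero]
      ring

theorem ssmf_neg {n : ℕ} {a : STerm} (h : SSMF n a) :
    ∃ c : STerm, SSMF n c ∧ c.vars = a.vars ∧
      ∀ (M : Type) [Meadow M] (sg : M → M), IsSign M sg →
        ∀ ρ : ℕ → M, c.eval sg ρ = -(a.eval sg ρ) := by
  induction h with
  | base u v hu hv =>
    refine ⟨.mul (.neg u) (.inv v), SSMF.base _ _ hu hv, ?_, ?_⟩
    · ext x; simp only [STerm.vars]
    · intro M _ sg hs ρ
      simp only [STerm.eval]
      ring
  | step n u P Q hu hP hQ ihP ihQ =>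
    obtain ⟨cP, hcP, hvP, heP⟩ := ihP
    obtain ⟨cQ, hcQ, hvQ, heQ⟩ := ihQ
    refine ⟨.add (.mul u.pseudoZero cP) (.mul u.pseudoOne cQ),
      SSMF.step n u cP cQ hu hcP hcQ, ?_, ?_⟩
    · ext x
      simp only [STerm.vars, STerm.pseudoZero, STerm.pseudoOne, hvP, hvQ, Set.mem_union,
        Set.mem_empty_iff_false]
      try tauto
    · intro M _ sg hs ρ
      simp only [STerm.eval, eval_pseudoZero, eval_pseudoOne, heP M sg hs ρ, heQ M sg hs ρ]
      ring

theorem ssmf_sgn {n : ℕ} {a : STerm} (h : SSMF n a) :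
    ∃ c : STerm, SSMF n c ∧ c.vars = a.vars ∧
      ∀ (M : Type) [Meadow M] (sg : M → M), IsSign M sg →
        ∀ ρ : ℕ → M, c.eval sg ρ = sg (a.eval sg ρ) := by
  induction h with
  | base u v hu hv =>
    refine ⟨.mul (.mul (.sgn u) (.sgn v)) (.inv .one),
      SSMF.base _ _ ⟨hu, hv⟩ trivial, ?_, ?_⟩
    · ext x
      simp only [STerm.vars, Set.mem_union, Set.mem_empty_iff_false]
      try tauto
    · intro M _ sg hs ρ
      simp only [STerm.eval]
      rw [hs.s5, hs.s4, m_inv_one]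
      ring
  | step n u P Q hu hP hQ ihP ihQ =>
    obtain ⟨cP, hcP, hvP, heP⟩ := ihP
    obtain ⟨cQ, hcQ, hvQ, heQ⟩ := ihQ
    refine ⟨.add (.mul u.pseudoZero cP) (.mul u.pseudoOne cQ),
      SSMF.step n u cP cQ hu hcP hcQ, ?_, ?_⟩
    · ext x
      simp only [STerm.vars, STerm.pseudoZero, STerm.pseudoOne, hvP, hvQ, Set.mem_union,
        Set.mem_empty_iff_false]
      try tauto
    · intro M _ sg hs ρ
      simp only [STerm.eval, eval_pseudoZero, eval_pseudoOne, heP M sg hs ρ, heQ M sg hs ρ]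
      rw [sub_eq_add_neg, m_sgn_split hs]

theorem ssmf_inv {n : ℕ} {a : STerm} (h : SSMF n a) :
    ∃ c : STerm, SSMF n c ∧ c.vars = a.vars ∧
      ∀ (M : Type) [Meadow M] (sg : M → M), IsSign M sg →
        ∀ ρ : ℕ → M, c.eval sg ρ = (a.eval sg ρ)⁻¹ := by
  induction h with
  | base u v hu hv =>
    refine ⟨.mul v (.inv u), SSMF.base _ _ hv hu, ?_, ?_⟩
    · ext x
      simp only [STerm.vars, Set.mem_union]
      try tauto
    · intro M _ sg hs ρ
      simp only [STerm.eval]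
      rw [m_mul_inv, Meadow.minv_inv]
      ring
  | step n u P Q hu hP hQ ihP ihQ =>
    obtain ⟨cP, hcP, hvP, heP⟩ := ihP
    obtain ⟨cQ, hcQ, hvQ, heQ⟩ := ihQ
    refine ⟨.add (.mul u.pseudoZero cP) (.mul u.pseudoOne cQ),
      SSMF.step n u cP cQ hu hcP hcQ, ?_, ?_⟩
    · ext x
      simp only [STerm.vars, STerm.pseudoZero, STerm.pseudoOne, hvP, hvQ, Set.mem_union,
        Set.mem_empty_iff_false]
      try tauto
    · intro M _ sg hs ρ
      simp only [STerm.eval, eval_pseudoZero, eval_pseudoOne, heP M sg hs ρ, heQ M sg hs ρ]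
      rw [sub_eq_add_neg, m_inv_split _ _ _ (m_idem _)]

theorem ssmf_mul {m : ℕ} {a : STerm} (ha : SSMF m a) :
    ∀ {n : ℕ} {b : STerm}, SSMF n b →
    ∃ (c : STerm) (k : ℕ), SSMF k c ∧ c.vars = a.vars ∪ b.vars ∧
      ∀ (M : Type) [Meadow M] (sg : M → M), IsSign M sg →
        ∀ ρ : ℕ → M, c.eval sg ρ = a.eval sg ρ * b.eval sg ρ := by
  induction ha with
  | base u v hu hv =>
    intro n b hb
    induction hb with
    | base u' v' hu' hv' =>
      refine ⟨.mul (.mul u u') (.inv (.mul v v')), 0, SSMF.base _ _ ⟨hu, hu'⟩ ⟨hv, hv'⟩, ?_, ?_⟩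
      · ext x
        simp only [STerm.vars, Set.mem_union]
        try tauto
      · intro M _ sg hs ρ
        simp only [STerm.eval]
        rw [m_mul_inv]
        ring
    | step n w P Q hw hP hQ ihP ihQ =>
      obtain ⟨cP, kP, hcP, hvP, heP⟩ := ihP
      obtain ⟨cQ, kQ, hcQ, hvQ, heQ⟩ := ihQ
      obtain ⟨cP', hcP', hvP', heP'⟩ := ssmf_lift hcP (max kP kQ) (le_max_left _ _)
      obtain ⟨cQ', hcQ', hvQ', heQ'⟩ := ssmf_lift hcQ (max kP kQ) (le_max_right _ _)
      refine ⟨.add (.mul w.pseudoZero cP') (.mul w.pseudoOne cQ'), max kP kQ + 1,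
        SSMF.step _ w cP' cQ' hw hcP' hcQ', ?_, ?_⟩
      · ext x
        simp only [STerm.vars, STerm.pseudoZero, STerm.pseudoOne, hvP', hvQ', hvP, hvQ,
          Set.mem_union, Set.mem_empty_iff_false]
        try tauto
      · intro M _ sg hs ρ
        simp only [STerm.eval, eval_pseudoZero, eval_pseudoOne, heP' M sg hs ρ,
          heQ' M sg hs ρ, heP M sg hs ρ, heQ M sg hs ρ]
        ring
  | step m u P Q hu hP hQ ihP ihQ =>
    intro n b hb
    obtain ⟨cP, kP, hcP, hvP, heP⟩ := ihP hb
    obtain ⟨cQ, kQ, hcQ, hvQ, heQ⟩ := ihQ hb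
    obtain ⟨cP', hcP', hvP', heP'⟩ := ssmf_lift hcP (max kP kQ) (le_max_left _ _)
    obtain ⟨cQ', hcQ', hvQ', heQ'⟩ := ssmf_lift hcQ (max kP kQ) (le_max_right _ _)
    refine ⟨.add (.mul u.pseudoZero cP') (.mul u.pseudoOne cQ'), max kP kQ + 1,
      SSMF.step _ u cP' cQ' hu hcP' hcQ', ?_, ?_⟩
    · ext x
      simp only [STerm.vars, STerm.pseudoZero, STerm.pseudoOne, hvP', hvQ', hvP, hvQ,
        Set.mem_union, Set.mem_empty_iff_false]
      try tauto
    · intro M _ sg hs ρ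
      simp only [STerm.eval, eval_pseudoZero, eval_pseudoOne, heP' M sg hs ρ,
        heQ' M sg hs ρ, heP M sg hs ρ, heQ M sg hs ρ]
      ring

theorem ssmf_add {m : ℕ} {a : STerm} (ha : SSMF m a) :
    ∀ {n : ℕ} {b : STerm}, SSMF n b →
    ∃ (c : STerm) (k : ℕ), SSMF k c ∧ c.vars = a.vars ∪ b.vars ∧
      ∀ (M : Type) [Meadow M] (sg : M → M), IsSign M sg →
        ∀ ρ : ℕ → M, c.eval sg ρ = a.eval sg ρ + b.eval sg ρ := by
  induction ha with
  | base u v hu hv =>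
    intro n b hb
    induction hb with
    | base u' v' hu' hv' =>
      refine ⟨.add (.mul v.pseudoZero
          (.add (.mul (STerm.pseudoZero .zero) (.mul u' (.inv v')))
                (.mul (STerm.pseudoOne .zero) (.mul u' (.inv v')))))
        (.mul v.pseudoOne
          (.add (.mul v'.pseudoZero (.mul u (.inv v)))
                (.mul v'.pseudoOne
                  (.mul (.add (.mul u v') (.mul u' v)) (.inv (.mul v v')))))), 2,
        SSMF.step 1 v _ _ hv
          (SSMF.step 0 .zero _ _ trivial (SSMF.base u' v' hu' hv') (SSMF.base u' v' hu' hv'))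
          (SSMF.step 0 v' _ _ hv' (SSMF.base u v hu hv)
            (SSMF.base _ _ ⟨⟨hu, hv'⟩, ⟨hu', hv⟩⟩ ⟨hv, hv'⟩)), ?_, ?_⟩
      · ext x
        simp only [STerm.vars, STerm.pseudoZero, STerm.pseudoOne, Set.mem_union,
          Set.mem_empty_iff_false]
        try tauto
      · intro M _ sg hs ρ
        simp only [STerm.eval, eval_pseudoZero, eval_pseudoOne]
        rw [m_inv_zero, m_mul_inv]
        linear_combination
          (u.eval sg ρ + v.eval sg ρ * u'.eval sg ρ * v'.eval sg ρ * ((v'.eval sg ρ)⁻¹) ^ 2)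
            * (m_ril' (v.eval sg ρ))
          + (u.eval sg ρ * v.eval sg ρ * v'.eval sg ρ * ((v.eval sg ρ)⁻¹) ^ 2
              + v.eval sg ρ * u'.eval sg ρ * (v.eval sg ρ)⁻¹) * (m_ril' (v'.eval sg ρ))
    | step n w P Q hw hP hQ ihP ihQ =>
      obtain ⟨cP, kP, hcP, hvP, heP⟩ := ihP
      obtain ⟨cQ, kQ, hcQ, hvQ, heQ⟩ := ihQ
      obtain ⟨cP', hcP', hvP', heP'⟩ := ssmf_lift hcP (max kP kQ) (le_max_left _ _)
      obtain ⟨cQ', hcQ', hvQ', heQ'⟩ := ssmf_lift hcQ (max kP kQ) (le_max_right _ _)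
      refine ⟨.add (.mul w.pseudoZero cP') (.mul w.pseudoOne cQ'), max kP kQ + 1,
        SSMF.step _ w cP' cQ' hw hcP' hcQ', ?_, ?_⟩
      · ext x
        simp only [STerm.vars, STerm.pseudoZero, STerm.pseudoOne, hvP', hvQ', hvP, hvQ,
          Set.mem_union, Set.mem_empty_iff_false]
        try tauto
      · intro M _ sg hs ρ
        simp only [STerm.eval, eval_pseudoZero, eval_pseudoOne, heP' M sg hs ρ,
          heQ' M sg hs ρ, heP M sg hs ρ, heQ M sg hs ρ]
        ring
  | step m u P Q hu hP hQ ihP ihQ =>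
    intro n b hb
    obtain ⟨cP, kP, hcP, hvP, heP⟩ := ihP hb
    obtain ⟨cQ, kQ, hcQ, hvQ, heQ⟩ := ihQ hb
    obtain ⟨cP', hcP', hvP', heP'⟩ := ssmf_lift hcP (max kP kQ) (le_max_left _ _)
    obtain ⟨cQ', hcQ', hvQ', heQ'⟩ := ssmf_lift hcQ (max kP kQ) (le_max_right _ _)
    refine ⟨.add (.mul u.pseudoZero cP') (.mul u.pseudoOne cQ'), max kP kQ + 1,
      SSMF.step _ u cP' cQ' hu hcP' hcQ', ?_, ?_⟩
    · ext x
      simp only [STerm.vars, STerm.pseudoZero, STerm.pseudoOne, hvP', hvQ', hvP, hvQ,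
        Set.mem_union, Set.mem_empty_iff_false]
      try tauto
    · intro M _ sg hs ρ
      simp only [STerm.eval, eval_pseudoZero, eval_pseudoOne, heP' M sg hs ρ,
        heQ' M sg hs ρ, heP M sg hs ρ, heQ M sg hs ρ]
      ring

/-- every term over `Σ_ms` is equal, in every signed meadow, to a
Signed Standard Meadow Form with the same variables. -/
theorem exists_ssmf (t : STerm) :
    ∃ t' : STerm, (∃ n : ℕ, SSMF n t') ∧ t'.vars = t.vars ∧
      ∀ (M : Type) [Meadow M] (sg : M → M), IsSign M sg →
        ∀ ρ : ℕ → M, t.eval sg ρ = t'.eval sg ρ := by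
  induction t with
  | var v =>
    refine ⟨.mul (.var v) (.inv .one), ⟨0, SSMF.base _ _ trivial trivial⟩, ?_, ?_⟩
    · ext x
      simp only [STerm.vars, Set.mem_union, Set.mem_empty_iff_false, Set.mem_singleton_iff]
      try tauto
    · intro M _ sg hs ρ
      simp only [STerm.eval]
      rw [m_inv_one]
      ring
  | zero =>
    refine ⟨.mul .zero (.inv .one), ⟨0, SSMF.base _ _ trivial trivial⟩, ?_, ?_⟩
    · ext x
      simp only [STerm.vars, Set.mem_union, Set.mem_empty_iff_false]
      try tauto
    · intro M _ sg hs ρ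
      simp only [STerm.eval]
      ring
  | one =>
    refine ⟨.mul .one (.inv .one), ⟨0, SSMF.base _ _ trivial trivial⟩, ?_, ?_⟩
    · ext x
      simp only [STerm.vars, Set.mem_union, Set.mem_empty_iff_false]
      try tauto
    · intro M _ sg hs ρ
      simp only [STerm.eval]
      rw [m_inv_one]
      ring
  | neg t iht =>
    obtain ⟨a, ⟨na, hna⟩, hva, hea⟩ := iht
    obtain ⟨c, hc, hvc, hec⟩ := ssmf_neg hna
    refine ⟨c, ⟨na, hc⟩, ?_, ?_⟩
    · rw [hvc, hva]; rfl
    · intro M _ sg hs ρ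
      rw [hec M sg hs ρ]
      simp only [STerm.eval, hea M sg hs ρ]
  | add t₁ t₂ ih₁ ih₂ =>
    obtain ⟨a, ⟨na, hna⟩, hva, hea⟩ := ih₁
    obtain ⟨b, ⟨nb, hnb⟩, hvb, heb⟩ := ih₂
    obtain ⟨c, k, hc, hvc, hec⟩ := ssmf_add hna hnb
    refine ⟨c, ⟨k, hc⟩, ?_, ?_⟩
    · rw [hvc, hva, hvb]; rfl
    · intro M _ sg hs ρ
      rw [hec M sg hs ρ]
      simp only [STerm.eval, hea M sg hs ρ, heb M sg hs ρ]
  | mul t₁ t₂ ih₁ ih₂ =>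
    obtain ⟨a, ⟨na, hna⟩, hva, hea⟩ := ih₁
    obtain ⟨b, ⟨nb, hnb⟩, hvb, heb⟩ := ih₂
    obtain ⟨c, k, hc, hvc, hec⟩ := ssmf_mul hna hnb
    refine ⟨c, ⟨k, hc⟩, ?_, ?_⟩
    · rw [hvc, hva, hvb]; rfl
    · intro M _ sg hs ρ
      rw [hec M sg hs ρ]
      simp only [STerm.eval, hea M sg hs ρ, heb M sg hs ρ]
  | inv t iht =>
    obtain ⟨a, ⟨na, hna⟩, hva, hea⟩ := iht
    obtain ⟨c, hc, hvc, hec⟩ := ssmf_inv hna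
    refine ⟨c, ⟨na, hc⟩, ?_, ?_⟩
    · rw [hvc, hva]; rfl
    · intro M _ sg hs ρ
      rw [hec M sg hs ρ]
      simp only [STerm.eval, hea M sg hs ρ]
  | sgn t iht =>
    obtain ⟨a, ⟨na, hna⟩, hva, hea⟩ := iht
    obtain ⟨c, hc, hvc, hec⟩ := ssmf_sgn hna
    refine ⟨c, ⟨na, hc⟩, ?_, ?_⟩
    · rw [hvc, hva]; rfl
    · intro M _ sg hs ρ
      rw [hec M sg hs ρ]
      simp only [STerm.eval, hea M sg hs ρ]
end

section
/- For each term t over the complex meadow signature (0,1,i,−,+,·,⁻¹,conj) there exist real forms t₁ and t₂ with the same variables such that the equations re(t) = t₁ and im(t) = t₂ hold in every model of Md + CC + SSAV, where re(x) = (1/2)·(x + conj(x)) and im(x) = −(i/2)·(x − conj(x)). -/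
/-- A complex meadow (model of `Md + CC + SSAV`): a meadow with an imaginary unit
`i` and a conjugation `conj` satisfying the axioms `CC` and the scheme `SSAV`,
where `1_x = x·x⁻¹`. -/
structure IsComplexMeadow (M : Type) [Meadow M] (i : M) (conj : M → M) : Prop where
  cc0 : conj 0 = 0
  cc1 : conj 1 = 1
  cc2 : conj i = -i
  cc3 : ∀ x : M, conj (-x) = -conj x
  cc4 : ∀ x y : M, conj (x + y) = conj x + conj y
  cc5 : ∀ x y : M, conj (x * y) = conj x * conj y
  cc6 : ∀ x : M, conj x⁻¹ = (conj x)⁻¹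
  cc7 : ∀ x : M, conj (conj x) = x
  cc8 : i * i = -1
  cc9 : ∀ x : M, conj x * (conj x)⁻¹ = x * x⁻¹
  ssav : ∀ (n : ℕ) (x : Fin (n + 1) → M),
    (1 + ∑ j, x j * conj (x j)) * (1 + ∑ j, x j * conj (x j))⁻¹ = 1

/-- The real part `re(x) = (1/2)·(x + conj x)` in a complex meadow. -/
def cmRe {M : Type} [Meadow M] (conj : M → M) (x : M) : M :=
  (1 * (2 : M)⁻¹) * (x + conj x)

/-- The imaginary part `im(x) = −(i/2)·(x − conj x)` in a complex meadow. -/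
def cmIm {M : Type} [Meadow M] (i : M) (conj : M → M) (x : M) : M :=
  -(i * (2 : M)⁻¹) * (x - conj x)

/-- Terms over the complex meadow signature `(0,1,i,−,+,·,⁻¹,conj)`. -/
inductive CTerm : Type
  | var : ℕ → CTerm
  | zero : CTerm
  | one : CTerm
  | iunit : CTerm
  | neg : CTerm → CTerm
  | add : CTerm → CTerm → CTerm
  | mul : CTerm → CTerm → CTerm
  | inv : CTerm → CTerm
  | conj : CTerm → CTerm

def CTerm.eval {M : Type} [Zero M] [One M] [Neg M] [Add M] [Mul M] [Inv M]
    (i : M) (cj : M → M) (ρ : ℕ → M) : CTerm → M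
  | .var v => ρ v
  | .zero => 0
  | .one => 1
  | .iunit => i
  | .neg t => -(t.eval i cj ρ)
  | .add s t => s.eval i cj ρ + t.eval i cj ρ
  | .mul s t => s.eval i cj ρ * t.eval i cj ρ
  | .inv t => (t.eval i cj ρ)⁻¹
  | .conj t => cj (t.eval i cj ρ)

def CTerm.vars : CTerm → Set ℕ
  | .var v => {v}
  | .zero => ∅
  | .one => ∅
  | .iunit => ∅
  | .neg t => t.vars
  | .add s t => s.vars ∪ t.vars
  | .mul s t => s.vars ∪ t.vars
  | .inv t => t.vars
  | .conj t => t.vars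

/-- Real forms: generated from `0`, `1`, `re(x)` and `im(x)` (for variables `x`)
by `−`, `⁻¹`, `+` and `·`. -/
inductive RealForm : Type
  | zero : RealForm
  | one : RealForm
  | reVar : ℕ → RealForm
  | imVar : ℕ → RealForm
  | neg : RealForm → RealForm
  | inv : RealForm → RealForm
  | add : RealForm → RealForm → RealForm
  | mul : RealForm → RealForm → RealForm

def RealForm.eval {M : Type} [Meadow M] (i : M) (cj : M → M) (ρ : ℕ → M) :
    RealForm → M
  | .zero => 0
  | .one => 1
  | .reVar v => cmRe cj (ρ v)
  | .imVar v => cmIm i cj (ρ v)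
  | .neg t => -(t.eval i cj ρ)
  | .inv t => (t.eval i cj ρ)⁻¹
  | .add s t => s.eval i cj ρ + t.eval i cj ρ
  | .mul s t => s.eval i cj ρ * t.eval i cj ρ

def RealForm.vars : RealForm → Set ℕ
  | .zero => ∅
  | .one => ∅
  | .reVar v => {v}
  | .imVar v => {v}
  | .neg t => t.vars
  | .inv t => t.vars
  | .add s t => s.vars ∪ t.vars
  | .mul s t => s.vars ∪ t.vars

section Aux

variable {M : Type} [Meadow M]

lemma minv_qi (x : M) : x⁻¹ * x * x⁻¹ = x⁻¹ := by
  have h := Meadow.ril (x⁻¹ : M)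
  rw [Meadow.minv_inv] at h
  linear_combination h

lemma ril' (x : M) : x * x⁻¹ * x = x := by
  linear_combination Meadow.ril x

lemma qinv_unique (a z w : M) (h1 : a * z * a = a) (h2 : z * a * z = z)
    (h3 : a * w * a = a) (h4 : w * a * w = w) : z = w := by
  have haz : a * z = a * w := by linear_combination w * h1 - z * h3
  linear_combination (-1 : M) * h2 + z * haz + w * haz + h4

lemma mul_minv (a b : M) : (a * b)⁻¹ = a⁻¹ * b⁻¹ := by
  refine qinv_unique (a * b) _ _ (ril' (a * b)) (minv_qi (a * b)) ?_ ?_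
  · linear_combination b * Meadow.ril a + (a * (a * a⁻¹)) * Meadow.ril b
  · linear_combination (b⁻¹ * b * b⁻¹) * minv_qi a + a⁻¹ * minv_qi b

variable (i : M) (cj : M → M)

lemma two_minv (hcm : IsComplexMeadow M i cj) : (2 : M) * (2 : M)⁻¹ = 1 := by
  have h := hcm.ssav 0 (fun _ => 1)
  simpa [hcm.cc1, one_add_one_eq_two] using h

lemma cj_two_minv (hcm : IsComplexMeadow M i cj) : cj (2 : M)⁻¹ = (2 : M)⁻¹ := by
  have h2 : cj (2 : M) = 2 := by
    rw [show (2 : M) = 1 + 1 by norm_num, hcm.cc4, hcm.cc1]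
  rw [hcm.cc6, h2]

lemma cj_sub (hcm : IsComplexMeadow M i cj) (x y : M) : cj (x - y) = cj x - cj y := by
  rw [sub_eq_add_neg, hcm.cc4, hcm.cc3, sub_eq_add_neg]

lemma inv_rep (hcm : IsComplexMeadow M i cj) (a : M) : a⁻¹ = cj a * (a * cj a)⁻¹ := by
  rw [mul_minv]
  linear_combination (-(a⁻¹)) * hcm.cc9 a - minv_qi a

lemma re_fix (hcm : IsComplexMeadow M i cj) (a : M) : cj (cmRe cj a) = cmRe cj a := by
  unfold cmRe
  rw [hcm.cc5, hcm.cc5, hcm.cc1, hcm.cc4, hcm.cc7, cj_two_minv i cj hcm]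
  ring

lemma im_fix (hcm : IsComplexMeadow M i cj) (a : M) : cj (cmIm i cj a) = cmIm i cj a := by
  unfold cmIm
  rw [hcm.cc5, hcm.cc3, hcm.cc5, hcm.cc2, cj_sub i cj hcm, hcm.cc7,
    cj_two_minv i cj hcm]
  ring

lemma decomp (hcm : IsComplexMeadow M i cj) (a : M) :
    a = cmRe cj a + i * cmIm i cj a := by
  unfold cmRe cmIm
  have h2 := two_minv i cj hcm
  linear_combination (-a) * h2 + ((2 : M)⁻¹ * (a - cj a)) * hcm.cc8

lemma re_of (hcm : IsComplexMeadow M i cj) (p q : M) (hp : cj p = p) (hq : cj q = q) :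
    cmRe cj (p + i * q) = p := by
  unfold cmRe
  rw [hcm.cc4, hcm.cc5, hcm.cc2, hp, hq]
  linear_combination p * two_minv i cj hcm

lemma im_of (hcm : IsComplexMeadow M i cj) (p q : M) (hp : cj p = p) (hq : cj q = q) :
    cmIm i cj (p + i * q) = q := by
  unfold cmIm
  rw [hcm.cc4, hcm.cc5, hcm.cc2, hp, hq]
  have h2 := two_minv i cj hcm
  linear_combination (-(i * i) * q) * h2 - q * hcm.cc8

lemma re_mul' (hcm : IsComplexMeadow M i cj) (p q r s : M)
    (hp : cj p = p) (hq : cj q = q) (hr : cj r = r) (hs : cj s = s) :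
    cmRe cj ((p + i * q) * (r + i * s)) = p * r - q * s := by
  unfold cmRe
  rw [hcm.cc5, hcm.cc4, hcm.cc4, hcm.cc5, hcm.cc5, hcm.cc2, hp, hq, hr, hs]
  linear_combination (p * r + (i * i) * q * s) * two_minv i cj hcm
    + (q * s) * hcm.cc8

lemma im_mul' (hcm : IsComplexMeadow M i cj) (p q r s : M)
    (hp : cj p = p) (hq : cj q = q) (hr : cj r = r) (hs : cj s = s) :
    cmIm i cj ((p + i * q) * (r + i * s)) = p * s + q * r := by
  unfold cmIm
  rw [hcm.cc5, hcm.cc4, hcm.cc4, hcm.cc5, hcm.cc5, hcm.cc2, hp, hq, hr, hs]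
  linear_combination (-(i * i) * (p * s + q * r)) * two_minv i cj hcm
    + (-(p * s + q * r)) * hcm.cc8

lemma inv_rep' (hcm : IsComplexMeadow M i cj) (p q : M)
    (hp : cj p = p) (hq : cj q = q) :
    (p + i * q)⁻¹ = (p - i * q) * (p * p + q * q)⁻¹ := by
  have hc : cj (p + i * q) = p - i * q := by
    rw [hcm.cc4, hcm.cc5, hcm.cc2, hp, hq]; ring
  have hm : (p + i * q) * (p - i * q) = p * p + q * q := by
    linear_combination (-(q * q)) * hcm.cc8
  rw [inv_rep i cj hcm (p + i * q), hc, hm]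

lemma re_inv' (hcm : IsComplexMeadow M i cj) (p q : M)
    (hp : cj p = p) (hq : cj q = q) :
    cmRe cj ((p + i * q)⁻¹) = p * (p * p + q * q)⁻¹ := by
  have hd : cj ((p * p + q * q)⁻¹ : M) = (p * p + q * q)⁻¹ := by
    rw [hcm.cc6, hcm.cc4, hcm.cc5, hcm.cc5, hp, hq]
  rw [inv_rep' i cj hcm p q hp hq]
  unfold cmRe
  rw [hcm.cc5, cj_sub i cj hcm, hcm.cc5, hcm.cc2, hp, hq, hd]
  linear_combination (p * (p * p + q * q)⁻¹) * two_minv i cj hcm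

lemma im_inv' (hcm : IsComplexMeadow M i cj) (p q : M)
    (hp : cj p = p) (hq : cj q = q) :
    cmIm i cj ((p + i * q)⁻¹) = -(q * (p * p + q * q)⁻¹) := by
  have hd : cj ((p * p + q * q)⁻¹ : M) = (p * p + q * q)⁻¹ := by
    rw [hcm.cc6, hcm.cc4, hcm.cc5, hcm.cc5, hp, hq]
  rw [inv_rep' i cj hcm p q hp hq]
  unfold cmIm
  rw [hcm.cc5, cj_sub i cj hcm, hcm.cc5, hcm.cc2, hp, hq, hd]
  have h2 := two_minv i cj hcm
  linear_combination ((i * i) * q * (p * p + q * q)⁻¹) * h2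
    + (q * (p * p + q * q)⁻¹) * hcm.cc8

lemma re_mul (hcm : IsComplexMeadow M i cj) (a b : M) :
    cmRe cj (a * b) = cmRe cj a * cmRe cj b - cmIm i cj a * cmIm i cj b := by
  have h := re_mul' i cj hcm (cmRe cj a) (cmIm i cj a) (cmRe cj b) (cmIm i cj b)
    (re_fix i cj hcm a) (im_fix i cj hcm a) (re_fix i cj hcm b) (im_fix i cj hcm b)
  rw [← decomp i cj hcm a, ← decomp i cj hcm b] at h
  exact h

lemma im_mul (hcm : IsComplexMeadow M i cj) (a b : M) :
    cmIm i cj (a * b) = cmRe cj a * cmIm i cj b + cmIm i cj a * cmRe cj b := by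
  have h := im_mul' i cj hcm (cmRe cj a) (cmIm i cj a) (cmRe cj b) (cmIm i cj b)
    (re_fix i cj hcm a) (im_fix i cj hcm a) (re_fix i cj hcm b) (im_fix i cj hcm b)
  rw [← decomp i cj hcm a, ← decomp i cj hcm b] at h
  exact h

lemma re_inv (hcm : IsComplexMeadow M i cj) (a : M) :
    cmRe cj (a⁻¹) = cmRe cj a * (cmRe cj a * cmRe cj a + cmIm i cj a * cmIm i cj a)⁻¹ := by
  have h := re_inv' i cj hcm (cmRe cj a) (cmIm i cj a)
    (re_fix i cj hcm a) (im_fix i cj hcm a)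
  rw [← decomp i cj hcm a] at h
  exact h

lemma im_inv (hcm : IsComplexMeadow M i cj) (a : M) :
    cmIm i cj (a⁻¹) = -(cmIm i cj a * (cmRe cj a * cmRe cj a + cmIm i cj a * cmIm i cj a)⁻¹) := by
  have h := im_inv' i cj hcm (cmRe cj a) (cmIm i cj a)
    (re_fix i cj hcm a) (im_fix i cj hcm a)
  rw [← decomp i cj hcm a] at h
  exact h

lemma re_neg (hcm : IsComplexMeadow M i cj) (a : M) : cmRe cj (-a) = -cmRe cj a := by
  unfold cmRe; rw [hcm.cc3]; ring

lemma im_neg (hcm : IsComplexMeadow M i cj) (a : M) : cmIm i cj (-a) = -cmIm i cj a := by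
  unfold cmIm; rw [hcm.cc3]; ring

lemma re_add (hcm : IsComplexMeadow M i cj) (a b : M) :
    cmRe cj (a + b) = cmRe cj a + cmRe cj b := by
  unfold cmRe; rw [hcm.cc4]; ring

lemma im_add (hcm : IsComplexMeadow M i cj) (a b : M) :
    cmIm i cj (a + b) = cmIm i cj a + cmIm i cj b := by
  unfold cmIm; rw [hcm.cc4]; ring

lemma re_conj (hcm : IsComplexMeadow M i cj) (a : M) : cmRe cj (cj a) = cmRe cj a := by
  unfold cmRe; rw [hcm.cc7]; ring

lemma im_conj (hcm : IsComplexMeadow M i cj) (a : M) : cmIm i cj (cj a) = -cmIm i cj a := by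
  unfold cmIm; rw [hcm.cc7]; ring

lemma re_zero (hcm : IsComplexMeadow M i cj) : cmRe cj (0 : M) = 0 := by
  unfold cmRe; rw [hcm.cc0]; ring

lemma im_zero (hcm : IsComplexMeadow M i cj) : cmIm i cj (0 : M) = 0 := by
  unfold cmIm; rw [hcm.cc0]; ring

lemma re_one (hcm : IsComplexMeadow M i cj) : cmRe cj (1 : M) = 1 := by
  unfold cmRe; rw [hcm.cc1]
  linear_combination two_minv i cj hcm

lemma im_one (hcm : IsComplexMeadow M i cj) : cmIm i cj (1 : M) = 0 := by
  unfold cmIm; rw [hcm.cc1]; ring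

lemma re_i (hcm : IsComplexMeadow M i cj) : cmRe cj i = 0 := by
  unfold cmRe; rw [hcm.cc2]; ring

lemma im_i (hcm : IsComplexMeadow M i cj) : cmIm i cj i = 1 := by
  unfold cmIm; rw [hcm.cc2]
  linear_combination two_minv i cj hcm + (-(2 * (2 : M)⁻¹)) * hcm.cc8

end Aux

/-- for every complex meadow term `t` there are real forms `t₁`, `t₂`
with the same variables such that `re(t) = t₁` and `im(t) = t₂` hold in every model
of `Md + CC + SSAV`. -/
theorem exists_real_forms (t : CTerm) :
    ∃ t₁ t₂ : RealForm, t₁.vars = t.vars ∧ t₂.vars = t.vars ∧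
      ∀ (M : Type) [Meadow M] (i : M) (cj : M → M), IsComplexMeadow M i cj →
        ∀ ρ : ℕ → M,
          cmRe cj (t.eval i cj ρ) = t₁.eval i cj ρ ∧
          cmIm i cj (t.eval i cj ρ) = t₂.eval i cj ρ := by
  induction t with
  | var v =>
    exact ⟨.reVar v, .imVar v, rfl, rfl, fun M _ i cj hcm ρ => ⟨rfl, rfl⟩⟩
  | zero =>
    refine ⟨.zero, .zero, rfl, rfl, fun M _ i cj hcm ρ => ?_⟩
    exact ⟨re_zero i cj hcm, im_zero i cj hcm⟩
  | one =>
    refine ⟨.one, .zero, rfl, rfl, fun M _ i cj hcm ρ => ?_⟩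
    exact ⟨re_one i cj hcm, im_one i cj hcm⟩
  | iunit =>
    refine ⟨.zero, .one, rfl, rfl, fun M _ i cj hcm ρ => ?_⟩
    exact ⟨re_i i cj hcm, im_i i cj hcm⟩
  | neg t ih =>
    obtain ⟨r, s, hvr, hvs, hsem⟩ := ih
    refine ⟨.neg r, .neg s, hvr, hvs, fun M _ i cj hcm ρ => ?_⟩
    obtain ⟨h1, h2⟩ := hsem M i cj hcm ρ
    constructor
    · show cmRe cj (-(t.eval i cj ρ)) = -(r.eval i cj ρ)
      rw [re_neg i cj hcm, h1]
    · show cmIm i cj (-(t.eval i cj ρ)) = -(s.eval i cj ρ)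
      rw [im_neg i cj hcm, h2]
  | add a b iha ihb =>
    obtain ⟨ra, sa, hvra, hvsa, hsa⟩ := iha
    obtain ⟨rb, sb, hvrb, hvsb, hsb⟩ := ihb
    refine ⟨.add ra rb, .add sa sb, ?_, ?_, fun M _ i cj hcm ρ => ?_⟩
    · show ra.vars ∪ rb.vars = a.vars ∪ b.vars
      rw [hvra, hvrb]
    · show sa.vars ∪ sb.vars = a.vars ∪ b.vars
      rw [hvsa, hvsb]
    · obtain ⟨ha1, ha2⟩ := hsa M i cj hcm ρ
      obtain ⟨hb1, hb2⟩ := hsb M i cj hcm ρ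
      constructor
      · show cmRe cj (a.eval i cj ρ + b.eval i cj ρ) = ra.eval i cj ρ + rb.eval i cj ρ
        rw [re_add i cj hcm, ha1, hb1]
      · show cmIm i cj (a.eval i cj ρ + b.eval i cj ρ) = sa.eval i cj ρ + sb.eval i cj ρ
        rw [im_add i cj hcm, ha2, hb2]
  | mul a b iha ihb =>
    obtain ⟨ra, sa, hvra, hvsa, hsa⟩ := iha
    obtain ⟨rb, sb, hvrb, hvsb, hsb⟩ := ihb
    refine ⟨.add (.mul ra rb) (.neg (.mul sa sb)),
      .add (.mul ra sb) (.mul sa rb), ?_, ?_, fun M _ i cj hcm ρ => ?_⟩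
    · show (ra.vars ∪ rb.vars) ∪ (sa.vars ∪ sb.vars) = a.vars ∪ b.vars
      rw [hvra, hvrb, hvsa, hvsb, Set.union_self]
    · show (ra.vars ∪ sb.vars) ∪ (sa.vars ∪ rb.vars) = a.vars ∪ b.vars
      rw [hvra, hvrb, hvsa, hvsb, Set.union_self]
    · obtain ⟨ha1, ha2⟩ := hsa M i cj hcm ρ
      obtain ⟨hb1, hb2⟩ := hsb M i cj hcm ρ
      constructor
      · show cmRe cj (a.eval i cj ρ * b.eval i cj ρ) =
          ra.eval i cj ρ * rb.eval i cj ρ + -(sa.eval i cj ρ * sb.eval i cj ρ)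
        rw [re_mul i cj hcm, ha1, hb1, ha2, hb2, sub_eq_add_neg]
      · show cmIm i cj (a.eval i cj ρ * b.eval i cj ρ) =
          ra.eval i cj ρ * sb.eval i cj ρ + sa.eval i cj ρ * rb.eval i cj ρ
        rw [im_mul i cj hcm, ha1, hb1, ha2, hb2]
  | inv t ih =>
    obtain ⟨r, s, hvr, hvs, hsem⟩ := ih
    refine ⟨.mul r (.inv (.add (.mul r r) (.mul s s))),
      .neg (.mul s (.inv (.add (.mul r r) (.mul s s)))), ?_, ?_,
      fun M _ i cj hcm ρ => ?_⟩
    · show r.vars ∪ ((r.vars ∪ r.vars) ∪ (s.vars ∪ s.vars)) = t.vars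
      simp [hvr, hvs]
    · show s.vars ∪ ((r.vars ∪ r.vars) ∪ (s.vars ∪ s.vars)) = t.vars
      simp [hvr, hvs]
    · obtain ⟨h1, h2⟩ := hsem M i cj hcm ρ
      constructor
      · show cmRe cj ((t.eval i cj ρ)⁻¹) =
          r.eval i cj ρ * (r.eval i cj ρ * r.eval i cj ρ + s.eval i cj ρ * s.eval i cj ρ)⁻¹
        rw [re_inv i cj hcm, h1, h2]
      · show cmIm i cj ((t.eval i cj ρ)⁻¹) =
          -(s.eval i cj ρ * (r.eval i cj ρ * r.eval i cj ρ + s.eval i cj ρ * s.eval i cj ρ)⁻¹)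
        rw [im_inv i cj hcm, h1, h2]
  | conj t ih =>
    obtain ⟨r, s, hvr, hvs, hsem⟩ := ih
    refine ⟨r, .neg s, hvr, hvs, fun M _ i cj hcm ρ => ?_⟩
    obtain ⟨h1, h2⟩ := hsem M i cj hcm ρ
    constructor
    · show cmRe cj (cj (t.eval i cj ρ)) = r.eval i cj ρ
      rw [re_conj i cj hcm, h1]
    · show cmIm i cj (cj (t.eval i cj ρ)) = -(s.eval i cj ρ)
      rw [im_conj i cj hcm, h2]
end
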